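/- arXiv:0806.2014 — 2 statements merged into one kernel-verified Lean document; each statement's English description precedes it below -/
import Mathlib

section
/- Let d ≥ 1 and let N(u) = (n_1(u),…,n_d(u)) be d-tuples of positive integers indexed by positive integers u such that n_j(u)/u → α_j for reals α_j > 0 as u → ∞. Then for every fixed real t > 0, θ_{N(u)}(u²t) → Θ_A(t) as u → ∞. -/
open Real Filter Topology

set_option maxHeartbeats 1000000

/-- Eigenvalues of the combinatorial Laplacian on the discrete torus determined by `N`. -/
noncomputable def Lam (d : ℕ) (N : Fin d → ℕ) (K : (j : Fin d) → Fin (N j)) : ℝ :=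
  2 * d - ∑ j, 2 * Real.cos (2 * Real.pi * (K j : ℝ) / (N j : ℝ))

/-- The theta function (heat trace) of the discrete torus determined by `N`. -/
noncomputable def discTheta (d : ℕ) (N : Fin d → ℕ) (t : ℝ) : ℝ :=
  ∑ K : ((j : Fin d) → Fin (N j)), Real.exp (-(Lam d N K) * t)

/-- The theta function (heat trace) of the real torus `Aℤ^d\ℝ^d`, where `A` is diagonal
with entries `α_1, …, α_d`. -/
noncomputable def realTheta (d : ℕ) (α : Fin d → ℝ) (t : ℝ) : ℝ :=
  (∏ j, α j) *
    ∑' K : Fin d → ℤ, ∏ j,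
      (4 * Real.pi * t) ^ (-(1:ℝ) / 2) * Real.exp (-(α j * (K j : ℝ)) ^ 2 / (4 * t))

lemma summable_int_gauss (c : ℝ) (hc : 0 < c) :
    Summable (fun k : ℤ => Real.exp (-c * (k : ℝ) ^ 2)) := by
  have hnat : Summable (fun n : ℕ => Real.exp (-c * (n : ℝ) ^ 2)) := by
    apply Summable.of_nonneg_of_le (g := fun n : ℕ => Real.exp (-c * (n:ℝ)^2))
      (f := fun n : ℕ => Real.exp (-c) ^ n) (fun n => (Real.exp_pos _).le)
    · intro n
      rw [← Real.exp_nat_mul]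
      apply Real.exp_le_exp.mpr
      have : (n : ℝ) ≤ (n : ℝ) ^ 2 := by
        rcases Nat.eq_zero_or_pos n with h | h
        · simp [h]
        · have h1 : (1:ℝ) ≤ (n:ℝ) := by exact_mod_cast h
          nlinarith
      nlinarith
    · exact summable_geometric_of_lt_one (Real.exp_pos _).le
        (Real.exp_lt_one_iff.mpr (by linarith))
  apply Summable.of_nat_of_neg <;> simpa using hnat


lemma thetaId (α t : ℝ) (hα : 0 < α) (ht : 0 < t) :
    α * ∑' k : ℤ, (4 * Real.pi * t) ^ (-(1:ℝ) / 2) * Real.exp (-(α * (k : ℝ)) ^ 2 / (4 * t)) =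
      ∑' k : ℤ, Real.exp (-Real.pi * (4 * Real.pi * t / α ^ 2) * (k : ℝ) ^ 2) := by
  have hπ := Real.pi_pos
  have ha : 0 < 4 * Real.pi * t / α ^ 2 := by positivity
  rw [Real.tsum_exp_neg_mul_int_sq ha, tsum_mul_left]
  have h1 : ∀ k : ℤ, Real.exp (-Real.pi / (4 * Real.pi * t / α ^ 2) * (k : ℝ) ^ 2)
      = Real.exp (-(α * (k : ℝ)) ^ 2 / (4 * t)) := by
    intro k
    congr 1
    field_simp
  rw [tsum_congr h1]
  have hb : (0:ℝ) < 4 * Real.pi * t := by positivity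
  have hpre : (1 : ℝ) / (4 * Real.pi * t / α ^ 2) ^ ((1:ℝ) / 2)
      = α * (4 * Real.pi * t) ^ (-(1:ℝ) / 2) := by
    rw [Real.div_rpow hb.le (by positivity)]
    have h2 : ((α ^ 2 : ℝ)) ^ ((1:ℝ)/2) = α := by
      rw [← Real.rpow_natCast α 2, ← Real.rpow_mul hα.le]
      norm_num
    rw [h2]
    rw [show (-(1:ℝ)/2) = -((1:ℝ)/2) by norm_num, Real.rpow_neg hb.le]
    have h3 : (4 * Real.pi * t) ^ ((1:ℝ)/2) ≠ 0 := by
      positivity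
    field_simp
  rw [hpre]
  ring

-- 2 - 2 cos(2x) = 4 sin(x)^2
lemma two_sub_cos (x : ℝ) : 2 - 2 * Real.cos (2 * x) = 4 * Real.sin x ^ 2 := by
  have h := Real.cos_two_mul x
  have h2 := Real.sin_sq_add_cos_sq x
  nlinarith

-- the 1D discrete sum
noncomputable def S1 (n : ℕ) (s : ℝ) : ℝ :=
  ∑ k : Fin n, Real.exp (-(2 - 2 * Real.cos (2 * Real.pi * (k : ℝ) / (n : ℝ))) * s)

-- Step A : rewrite S1 as a tsum over ℤ with centered window
noncomputable def g1 (n : ℕ) (s : ℝ) (k : ℤ) : ℝ :=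
  if -(n : ℤ) < 2 * k ∧ 2 * k ≤ (n : ℤ) then
    Real.exp (-(2 - 2 * Real.cos (2 * Real.pi * (k : ℝ) / (n : ℝ))) * s) else 0

lemma S1_eq_tsum (n : ℕ) (hn : 0 < n) (s : ℝ) : S1 n s = ∑' k : ℤ, g1 n s k := by
  classical
  set φ : Fin n → ℤ := fun k => if 2 * (k : ℕ) ≤ n then (k : ℤ) else (k : ℤ) - n with hφ
  have hmem : ∀ k : Fin n, -(n : ℤ) < 2 * φ k ∧ 2 * φ k ≤ (n : ℤ) := by
    intro k
    have hk := k.isLt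
    by_cases h : 2 * (k : ℕ) ≤ n <;> simp only [hφ, h, if_true, if_false] <;> omega
  have hinj : Function.Injective φ := by
    intro a b hab
    have ha := a.isLt; have hb := b.isLt
    by_cases h1 : 2 * (a : ℕ) ≤ n <;> by_cases h2 : 2 * (b : ℕ) ≤ n <;>
      simp only [hφ, h1, h2, if_true, if_false] at hab <;>
      · apply Fin.ext; omega
  have hval : ∀ k : Fin n, g1 n s (φ k)
      = Real.exp (-(2 - 2 * Real.cos (2 * Real.pi * (k : ℝ) / (n : ℝ))) * s) := by
    intro k
    rw [g1, if_pos (hmem k)]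
    by_cases h : 2 * (k : ℕ) ≤ n
    · simp [hφ, h]
    · have : ((φ k : ℤ) : ℝ) = (k : ℝ) - n := by simp [hφ, h]
      rw [this]
      have hn' : (n : ℝ) ≠ 0 := Nat.cast_ne_zero.mpr hn.ne'
      have harg : 2 * Real.pi * ((k : ℝ) - n) / n = 2 * Real.pi * (k : ℝ) / n - 2 * Real.pi := by
        field_simp
      rw [harg, Real.cos_sub_two_pi]
  have hsupp : ∀ m : ℤ, m ∉ Finset.image φ Finset.univ → g1 n s m = 0 := by
    intro m hm
    rw [g1, if_neg]
    intro ⟨h1, h2⟩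
    apply hm
    simp only [Finset.mem_image, Finset.mem_univ, true_and]
    by_cases hm0 : 0 ≤ m
    · refine ⟨⟨m.toNat, by omega⟩, ?_⟩
      simp only [hφ]
      rw [if_pos (by omega)]
      omega
    · refine ⟨⟨(m + n).toNat, by omega⟩, ?_⟩
      simp only [hφ]
      rw [if_neg (by omega)]
      omega
  rw [tsum_eq_sum hsupp, Finset.sum_image (fun a _ b _ h => hinj h)]
  simp only [hval, S1]

lemma oneD (α t : ℝ) (hα : 0 < α) (ht : 0 < t) (n : ℕ → ℕ) (hn : ∀ u, 0 < n u)
    (hlim : Tendsto (fun u : ℕ => (n u : ℝ) / (u : ℝ)) atTop (nhds α)) :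
    Tendsto (fun u : ℕ => S1 (n u) ((u : ℝ) ^ 2 * t)) atTop
      (nhds (∑' k : ℤ, Real.exp (-Real.pi * (4 * Real.pi * t / α ^ 2) * (k : ℝ) ^ 2))) := by
  have hπ := Real.pi_pos
  -- n u → ∞ (as reals)
  have hn_top : Tendsto (fun u : ℕ => ((n u : ℝ))) atTop atTop := by
    have h1 : Tendsto (fun u : ℕ => ((n u : ℝ) / u) * u) atTop atTop :=
      Tendsto.pos_mul_atTop hα hlim tendsto_natCast_atTop_atTop
    apply h1.congr'
    filter_upwards [eventually_gt_atTop 0] with u hu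
    field_simp
  -- u / n u → 1/α
  have hinv : Tendsto (fun u : ℕ => (u : ℝ) / (n u : ℝ)) atTop (nhds α⁻¹) := by
    have h1 := hlim.inv₀ hα.ne'
    apply h1.congr'
    filter_upwards [eventually_gt_atTop 0] with u hu
    rw [inv_div]
  -- pointwise limits
  have hpt : ∀ k : ℤ, Tendsto (fun u : ℕ => g1 (n u) ((u : ℝ) ^ 2 * t) k) atTop
      (nhds (Real.exp (-Real.pi * (4 * Real.pi * t / α ^ 2) * (k : ℝ) ^ 2))) := by
    intro k
    -- u * sin (π k / n u) → π k / α
    have hsin : Tendsto (fun u : ℕ => (u : ℝ) * Real.sin (Real.pi * k / (n u : ℝ))) atTop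
        (nhds (Real.pi * k / α)) := by
      rcases eq_or_ne k 0 with rfl | hk
      · simpa using tendsto_const_nhds (x := (0:ℝ)) (f := atTop (α := ℕ))
      · have hx0 : Tendsto (fun u : ℕ => Real.pi * k / (n u : ℝ)) atTop (nhds 0) :=
          Tendsto.div_atTop tendsto_const_nhds hn_top
        have hxne : ∀ u, Real.pi * (k:ℝ) / (n u : ℝ) ≠ 0 := by
          intro u
          have := hn u
          have hk' : (k : ℝ) ≠ 0 := Int.cast_ne_zero.mpr hk
          positivity
        have hx0' : Tendsto (fun u : ℕ => Real.pi * k / (n u : ℝ)) atTop (𝓝[≠] (0:ℝ)) := by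
          rw [tendsto_nhdsWithin_iff]
          exact ⟨hx0, Eventually.of_forall fun u => hxne u⟩
        have hslope : Tendsto (fun x : ℝ => Real.sin x / x) (𝓝[≠] (0:ℝ)) (nhds 1) := by
          have h := (hasDerivAt_sin 0)
          rw [hasDerivAt_iff_tendsto_slope] at h
          simp only [Real.cos_zero] at h
          apply h.congr
          intro x
          simp [slope_def_field, div_eq_mul_inv, mul_comm]
        have hux : Tendsto (fun u : ℕ => (u : ℝ) * (Real.pi * k / (n u : ℝ))) atTop
            (nhds (Real.pi * k / α)) := by
          have h2 : Tendsto (fun u : ℕ => (Real.pi * k) * ((u:ℝ) / (n u : ℝ))) atTop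
              (nhds ((Real.pi * k) * α⁻¹)) := hinv.const_mul _
          have : (Real.pi * (k:ℝ)) * α⁻¹ = Real.pi * k / α := by field_simp
          rw [this] at h2
          apply h2.congr
          intro u; ring
        have := (hslope.comp hx0').mul hux
        rw [one_mul] at this
        apply this.congr
        intro u
        simp only [Function.comp_apply]
        have hx := hxne u
        rw [div_mul_eq_mul_div, div_eq_iff hx]
        ring
    -- the exponent converges
    have hexp : Tendsto (fun u : ℕ => 4 * ((u : ℝ) * Real.sin (Real.pi * k / (n u : ℝ))) ^ 2 * t)
        atTop (nhds (Real.pi * (4 * Real.pi * t / α ^ 2) * (k : ℝ) ^ 2)) := by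
      have h := ((hsin.pow 2).const_mul 4).mul_const t
      convert h using 2
      field_simp
    -- eventually in window and equal
    have hev : ∀ᶠ u : ℕ in atTop, g1 (n u) ((u : ℝ) ^ 2 * t) k
        = Real.exp (-(4 * ((u : ℝ) * Real.sin (Real.pi * k / (n u : ℝ))) ^ 2 * t)) := by
      filter_upwards [hn_top.eventually_gt_atTop (2 * |(k : ℝ)|)] with u hu
      have hwin : -((n u : ℤ)) < 2 * k ∧ 2 * k ≤ (n u : ℤ) := by
        have h2 : (2 * |k| : ℤ) < (n u : ℤ) := by
          have : ((2 * |k| : ℤ) : ℝ) < ((n u : ℤ) : ℝ) := by push_cast; push_cast at hu; linarith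
          exact_mod_cast this
        have := le_abs_self k
        have := neg_abs_le k
        omega
      rw [g1, if_pos hwin]
      congr 1
      have harg : 2 * Real.pi * (k : ℝ) / (n u : ℝ) = 2 * (Real.pi * k / (n u : ℝ)) := by ring
      rw [harg, two_sub_cos]
      ring
    have h := (Real.continuous_exp.tendsto _).comp hexp.neg
    have h2 : Real.exp (-(Real.pi * (4 * Real.pi * t / α ^ 2) * (k : ℝ) ^ 2))
        = Real.exp (-Real.pi * (4 * Real.pi * t / α ^ 2) * (k : ℝ) ^ 2) := by ring_nf
    rw [h2] at h
    exact Tendsto.congr' (hev.mono fun u h' => h'.symm) h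
  -- the dominating function
  set C : ℤ → ℝ := fun k => Real.exp (-(4 * t / α ^ 2) * (k : ℝ) ^ 2) with hC
  have hCsum : Summable C := summable_int_gauss _ (by positivity)
  have hbound : ∀ᶠ u : ℕ in atTop, ∀ k : ℤ, ‖g1 (n u) ((u : ℝ) ^ 2 * t) k‖ ≤ C k := by
    have hhalf : (1 / (2 * α)) < α⁻¹ := by
      rw [inv_eq_one_div]
      exact one_div_lt_one_div_of_lt hα (by linarith)
    filter_upwards [hinv.eventually (eventually_ge_nhds hhalf)] with u hu
    intro k
    by_cases hw : -((n u : ℤ)) < 2 * k ∧ 2 * k ≤ (n u : ℤ)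
    · rw [g1, if_pos hw, Real.norm_eq_abs, abs_of_pos (Real.exp_pos _), hC]
      apply Real.exp_le_exp.mpr
      have hn' : (0:ℝ) < (n u : ℝ) := by exact_mod_cast hn u
      set x : ℝ := Real.pi * (k : ℝ) / (n u : ℝ) with hx
      have harg : 2 * Real.pi * (k : ℝ) / (n u : ℝ) = 2 * x := by rw [hx]; ring
      rw [harg, two_sub_cos]
      -- |x| ≤ π/2
      have hk_le : 2 * |(k : ℝ)| ≤ (n u : ℝ) := by
        have h1 : 2 * |k| ≤ (n u : ℤ) := by
          have := le_abs_self k; have := neg_abs_le k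
          rcases abs_cases k with ⟨h, _⟩ | ⟨h, _⟩ <;> omega
        exact_mod_cast h1
      have hxabs : |x| = Real.pi * |(k : ℝ)| / (n u : ℝ) := by
        rw [hx, abs_div, abs_mul, abs_of_pos Real.pi_pos, abs_of_pos hn']
      have hxle : |x| ≤ Real.pi / 2 := by
        rw [hxabs, div_le_div_iff₀ hn' two_pos]
        nlinarith [Real.pi_pos]
      have hsin : 2 / Real.pi * |x| ≤ Real.sin |x| :=
        Real.mul_le_sin (abs_nonneg x) hxle
      have hsq : Real.sin x ^ 2 = Real.sin |x| ^ 2 := by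
        rcases abs_cases x with ⟨h, _⟩ | ⟨h, _⟩ <;> rw [h] <;> simp [Real.sin_neg]
      have hsin2 : (2 * |(k:ℝ)| / (n u : ℝ)) ^ 2 ≤ Real.sin x ^ 2 := by
        rw [hsq]
        have h0 : 0 ≤ 2 / Real.pi * |x| := by positivity
        have heq : 2 / Real.pi * |x| = 2 * |(k:ℝ)| / (n u : ℝ) := by
          rw [hxabs]; field_simp
        nlinarith
      -- (u / n u)² ≥ 1/(4α²)
      have huv : (1 / (2 * α)) ≤ (u : ℝ) / (n u : ℝ) := hu
      have h1 : (1 / (2 * α)) ^ 2 ≤ ((u:ℝ) / (n u : ℝ)) ^ 2 := by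
        apply pow_le_pow_left₀ (by positivity) huv
      have hk2 : (2 * |(k:ℝ)| / (n u : ℝ)) ^ 2 = 4 * (k:ℝ)^2 / (n u : ℝ)^2 := by
        rw [div_pow]; rw [mul_pow]; rw [sq_abs]; norm_num
      have hgoal : 4 * t / α ^ 2 * (k:ℝ) ^ 2 ≤ 4 * Real.sin x ^ 2 * ((u:ℝ) ^ 2 * t) := by
        have h3 : 4 * (k:ℝ)^2 / (n u : ℝ)^2 ≤ Real.sin x ^ 2 := by rw [← hk2]; exact hsin2
        have h4 : ((u:ℝ))^2 / (n u : ℝ)^2 = ((u:ℝ) / (n u:ℝ))^2 := by rw [div_pow]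
        have h5 : (1 / (2*α))^2 = 1 / (4 * α^2) := by rw [div_pow]; norm_num; ring_nf
        have h6 : 1 / (4 * α ^ 2) ≤ ((u:ℝ))^2 / (n u : ℝ)^2 := by rw [h4, ← h5]; exact h1
        have hn2 : (0:ℝ) < (n u : ℝ)^2 := by positivity
        have key : 4 * (k:ℝ)^2 * ((u:ℝ)^2 / (n u:ℝ)^2) ≤ Real.sin x ^2 * (u:ℝ)^2 := by
          have := mul_le_mul_of_nonneg_right h3 (sq_nonneg ((u:ℝ)))
          calc 4 * (k:ℝ)^2 * ((u:ℝ)^2 / (n u:ℝ)^2)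
              = (4 * (k:ℝ)^2 / (n u:ℝ)^2) * (u:ℝ)^2 := by ring
            _ ≤ Real.sin x ^2 * (u:ℝ)^2 := this
        have key2 : 4 * (k:ℝ)^2 * (1 / (4 * α^2)) ≤ 4 * (k:ℝ)^2 * ((u:ℝ)^2 / (n u:ℝ)^2) := by
          apply mul_le_mul_of_nonneg_left h6 (by positivity)
        have key3 := key2.trans key
        have key4 := mul_le_mul_of_nonneg_left key3 ht.le
        have hre : 4 * (k:ℝ)^2 * (1/(4*α^2)) = (k:ℝ)^2 / α^2 := by field_simp
        rw [hre] at key4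
        have key5 := mul_le_mul_of_nonneg_left key4 (by norm_num : (0:ℝ) ≤ 4)
        calc 4*t/α^2*(k:ℝ)^2 = 4*(t*((k:ℝ)^2/α^2)) := by ring
          _ ≤ 4*(t*(Real.sin x^2*(u:ℝ)^2)) := key5
          _ = 4*Real.sin x^2*((u:ℝ)^2*t) := by ring
      linarith [hgoal]
    · rw [g1, if_neg hw]
      simp only [norm_zero, hC]
      exact (Real.exp_pos _).le
  have hdom := tendsto_tsum_of_dominated_convergence hCsum hpt hbound
  exact hdom.congr fun u => (S1_eq_tsum (n u) (hn u) _).symm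

lemma discTheta_eq_prod (d : ℕ) (N : Fin d → ℕ) (s : ℝ) :
    discTheta d N s = ∏ j, S1 (N j) s := by
  rw [discTheta]
  have hLam : ∀ K : (j : Fin d) → Fin (N j),
      Real.exp (-(Lam d N K) * s)
        = ∏ j, Real.exp (-(2 - 2 * Real.cos (2 * Real.pi * (K j : ℝ) / (N j : ℝ))) * s) := by
    intro K
    rw [← Real.exp_sum]
    congr 1
    rw [Lam]
    have : (2 * (d:ℝ)) = ∑ _j : Fin d, (2:ℝ) := by
      rw [Finset.sum_const, Finset.card_univ, Fintype.card_fin]; ring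
    rw [this, ← Finset.sum_sub_distrib, ← Finset.sum_neg_distrib, Finset.sum_mul]
  simp_rw [hLam]
  simp only [S1]
  rw [Finset.prod_univ_sum, Fintype.piFinset_univ]


lemma tsum_pi_prod : ∀ (d : ℕ) (f : Fin d → ℤ → ℝ), (∀ j k, 0 ≤ f j k) →
    (∀ j, Summable (f j)) →
    (Summable fun K : Fin d → ℤ => ∏ j, f j (K j)) ∧
    ((∑' K : Fin d → ℤ, ∏ j, f j (K j)) = ∏ j, ∑' k, f j k) := by
  intro d
  induction d with
  | zero =>
    intro f h0 hs
    constructor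
    · exact Summable.of_finite
    · have h1 : ∀ K : Fin 0 → ℤ, (∏ j, f j (K j)) = 1 := fun K => by simp
      simp_rw [h1]
      rw [tsum_fintype]
      simp
  | succ d ih =>
    intro f h0 hs
    obtain ⟨ihs, ihe⟩ := ih (fun j => f j.succ) (fun j k => h0 j.succ k) (fun j => hs j.succ)
    have hprod : ∀ p : ℤ × (Fin d → ℤ),
        (∏ j, f j ((Fin.consEquiv (fun _ : Fin (d+1) => ℤ)) p j))
          = f 0 p.1 * ∏ j : Fin d, f j.succ (p.2 j) := by
      intro p
      rw [Fin.prod_univ_succ]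
      simp [Fin.consEquiv]
    have hsum2 : Summable fun p : ℤ × (Fin d → ℤ) => f 0 p.1 * ∏ j : Fin d, f j.succ (p.2 j) := by
      apply Summable.mul_of_nonneg (f := f 0) (g := fun K : Fin d → ℤ => ∏ j : Fin d, f j.succ (K j))
        (hs 0) ihs
      · intro k; exact h0 0 k
      · intro K; exact Finset.prod_nonneg fun j _ => h0 j.succ (K j)
    have hKsum : Summable fun K : Fin (d+1) → ℤ => ∏ j, f j (K j) := by
      rw [← Equiv.summable_iff (Fin.consEquiv (fun _ : Fin (d+1) => ℤ))]
      exact hsum2.congr fun p => (hprod p).symm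
    refine ⟨hKsum, ?_⟩
    have h2 : (∑' K : Fin (d+1) → ℤ, ∏ j, f j (K j))
        = ∑' p : ℤ × (Fin d → ℤ), f 0 p.1 * ∏ j : Fin d, f j.succ (p.2 j) := by
      rw [← Equiv.tsum_eq (Fin.consEquiv (fun _ : Fin (d+1) => ℤ))
        (fun K : Fin (d+1) → ℤ => ∏ j, f j (K j))]
      exact tsum_congr hprod
    rw [h2, Summable.tsum_prod' hsum2 (fun b => ihs.mul_left (f 0 b)), Fin.prod_univ_succ]
    have h3 : ∀ b : ℤ, (∑' c : Fin d → ℤ, f 0 b * ∏ j : Fin d, f j.succ (c j))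
        = f 0 b * ∏ j : Fin d, ∑' k, f j.succ k := by
      intro b
      rw [tsum_mul_left, ihe]
    rw [tsum_congr h3, tsum_mul_right]

/-- Rescaled heat traces of degenerating discrete tori converge pointwise to the heat trace of
the limiting real torus. -/
theorem discTheta_tendsto_realTheta (d : ℕ) (hd : 1 ≤ d) (N : ℕ → Fin d → ℕ)
    (hN : ∀ u j, 0 < N u j) (α : Fin d → ℝ) (hα : ∀ j, 0 < α j)
    (hlim : ∀ j, Tendsto (fun u : ℕ => (N u j : ℝ) / (u : ℝ)) atTop (nhds (α j)))
    (t : ℝ) (ht : 0 < t) :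
    Tendsto (fun u : ℕ => discTheta d (N u) ((u : ℝ) ^ 2 * t)) atTop
      (nhds (realTheta d α t)) := by
  set F : Fin d → ℤ → ℝ := fun j k =>
    (4 * Real.pi * t) ^ (-(1:ℝ) / 2) * Real.exp (-(α j * (k : ℝ)) ^ 2 / (4 * t)) with hF
  have hF0 : ∀ j k, 0 ≤ F j k := fun j k => by
    rw [hF]
    have := Real.rpow_nonneg (by positivity : (0:ℝ) ≤ 4 * Real.pi * t) (-(1:ℝ)/2)
    positivity
  have hFs : ∀ j, Summable (F j) := by
    intro j
    have h := (summable_int_gauss (α j ^ 2 / (4 * t)) (by have := hα j; positivity)).mul_left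
      ((4 * Real.pi * t) ^ (-(1:ℝ) / 2))
    apply h.congr
    intro k
    rw [hF]
    congr 1
    congr 1
    field_simp
  have hfact : realTheta d α t
      = ∏ j, (α j * ∑' k : ℤ, F j k) := by
    rw [realTheta]
    have h2 := (tsum_pi_prod d F hF0 hFs).2
    rw [show (∑' K : Fin d → ℤ, ∏ j,
        (4 * Real.pi * t) ^ (-(1:ℝ) / 2) * Real.exp (-(α j * (K j : ℝ)) ^ 2 / (4 * t)))
      = ∑' K : Fin d → ℤ, ∏ j, F j (K j) from rfl, h2, ← Finset.prod_mul_distrib]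
  rw [hfact]
  have hj : ∀ j : Fin d, Tendsto (fun u : ℕ => S1 (N u j) ((u : ℝ) ^ 2 * t)) atTop
      (nhds (α j * ∑' k : ℤ, F j k)) := by
    intro j
    have hid := thetaId (α j) t (hα j) ht
    rw [hF]
    rw [hid]
    exact oneD (α j) t (hα j) ht (fun u => N u j) (fun u => hN u j) (hlim j)
  have hprod := tendsto_finset_prod (x := atTop)
    (f := fun (j : Fin d) (u : ℕ) => S1 (N u j) ((u : ℝ) ^ 2 * t))
    (a := fun j => α j * ∑' k : ℤ, F j k) Finset.univ (fun j _ => hj j)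
  exact hprod.congr fun u => (discTheta_eq_prod d (N u) _).symm
end

section
/- One has ∫_0^∞ e^{−2t}(I_0(2t) − 1) dt/t = log 2; equivalently, with 𝓘_1(0) = −∫_0^∞ (e^{−2t} I_0(2t) − e^{−t}) dt/t, one has 𝓘_1(0) = 0. -/
open MeasureTheory Real Set intervalIntegral

/-- The modified `I`-Bessel function of integer order `x`, via its integral
representation `I_x(t) = (1/π) ∫_0^π e^{t cos θ} cos(xθ) dθ`. -/
noncomputable def besselI (x : ℤ) (t : ℝ) : ℝ :=
  (1 / Real.pi) * ∫ θ in (0:ℝ)..Real.pi, Real.exp (t * Real.cos θ) * Real.cos ((x : ℝ) * θ)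

lemma besselI_zero (s : ℝ) :
    π * besselI 0 s = ∫ θ in (0:ℝ)..π, Real.exp (s * Real.cos θ) := by
  unfold besselI
  rw [← mul_assoc, mul_one_div, div_self Real.pi_ne_zero, one_mul]
  simp


open MeasureTheory Real Set intervalIntegral

lemma exp_neg_int {a : ℝ} (ha : 0 < a) :
    (∫ t in Ioi (0:ℝ), Real.exp (-(a * t))) = 1 / a := by
  have := integral_comp_mul_left_Ioi (fun x => Real.exp (-x)) 0 ha
  simp only [mul_zero, integral_exp_neg_Ioi, neg_zero, Real.exp_zero, smul_eq_mul,
    mul_one] at this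
  rw [this, one_div]

lemma frullani_core {a b : ℝ} (ha : 0 < a) (hab : a ≤ b) :
    IntegrableOn (fun t => (Real.exp (-(a * t)) - Real.exp (-(b * t))) / t) (Ioi 0) ∧
    (∫ t in Ioi (0:ℝ), (Real.exp (-(a * t)) - Real.exp (-(b * t))) / t)
      = Real.log b - Real.log a := by
  have hb : 0 < b := ha.trans_le hab
  set μ := volume.restrict (Ioc a b)
  set ν := volume.restrict (Ioi (0:ℝ))
  set f : ℝ → ℝ → ℝ := fun s t => Real.exp (-(s * t)) with hf
  have hcont : Continuous (Function.uncurry f) := by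
    apply Real.continuous_exp.comp
    exact (continuous_fst.mul continuous_snd).neg
  have h_int : Integrable (Function.uncurry f) (μ.prod ν) := by
    rw [integrable_prod_iff hcont.aestronglyMeasurable]
    constructor
    · filter_upwards [ae_restrict_mem measurableSet_Ioc] with s hs
      have : 0 < s := ha.trans hs.1
      have := exp_neg_integrableOn_Ioi 0 this
      exact (by simpa [neg_mul] using this : IntegrableOn (fun x => rexp (-(s * x))) (Ioi 0) volume)
    · have key : ∀ s ∈ Ioc a b, (∫ t, ‖f s t‖ ∂ν) = 1 / s := by
        intro s hs
        simp only [hf, Real.norm_eq_abs, Real.abs_exp]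
        exact exp_neg_int (ha.trans hs.1)
      have h1 : IntegrableOn (fun s : ℝ => 1 / s) (Ioc a b) := by
        have : IntervalIntegrable (fun s : ℝ => 1 / s) volume a b :=
          intervalIntegrable_one_div (fun x hx => by
            rcases mem_uIcc.mp hx with h | h
            · exact (ha.trans_le h.1).ne'
            · exact (hb.trans_le h.1).ne') (by fun_prop)
        rwa [intervalIntegrable_iff_integrableOn_Ioc_of_le hab] at this
      apply h1.congr
      filter_upwards [ae_restrict_mem measurableSet_Ioc] with s hs
      exact (key s hs).symm
  have swap := integral_integral_swap h_int
  -- LHS: ∫ s in Ioc a b, 1/s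
  have lhs_eq : (∫ s, ∫ t, f s t ∂ν ∂μ) = Real.log b - Real.log a := by
    have : (∫ s, ∫ t, f s t ∂ν ∂μ) = ∫ s in Ioc a b, 1 / s := by
      apply setIntegral_congr_fun measurableSet_Ioc
      intro s hs
      exact exp_neg_int (ha.trans hs.1)
    rw [this, ← intervalIntegral.integral_of_le hab,
      integral_one_div (fun hx => by
        rcases mem_uIcc.mp hx with h | h
        · exact absurd h.1 (not_le.mpr ha)
        · exact absurd h.1 (not_le.mpr hb)),
      Real.log_div hb.ne' ha.ne']
  -- inner s-integral
  have inner : ∀ t : ℝ, 0 < t →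
      (∫ s, f s t ∂μ) = (Real.exp (-(a * t)) - Real.exp (-(b * t))) / t := by
    intro t ht
    have : (∫ s, f s t ∂μ) = ∫ s in a..b, Real.exp (-(s * t)) := by
      rw [intervalIntegral.integral_of_le hab]
    rw [this]
    have h2 : (∫ s in a..b, Real.exp (-(s * t)))
        = t⁻¹ • ∫ u in a * t..b * t, Real.exp (-u) := by
      exact intervalIntegral.integral_comp_mul_right (fun u => Real.exp (-u)) ht.ne'
    rw [h2, intervalIntegral.integral_comp_neg (fun u => Real.exp u),
      integral_exp]
    rw [smul_eq_mul]
    ring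
  have hmarg : Integrable (fun t => ∫ s, f s t ∂μ) ν := by
    have := h_int.swap
    exact this.integral_prod_left
  constructor
  · refine hmarg.congr ?_
    filter_upwards [ae_restrict_mem measurableSet_Ioi] with t ht
    exact inner t ht
  · rw [← lhs_eq, swap]
    refine setIntegral_congr_fun measurableSet_Ioi fun t ht => (inner t ht).symm

lemma frullani {a b : ℝ} (ha : 0 < a) (hb : 0 < b) :
    IntegrableOn (fun t => (Real.exp (-(a * t)) - Real.exp (-(b * t))) / t) (Ioi 0) ∧
    (∫ t in Ioi (0:ℝ), (Real.exp (-(a * t)) - Real.exp (-(b * t))) / t)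
      = Real.log b - Real.log a := by
  rcases le_total a b with h | h
  · exact frullani_core ha h
  · obtain ⟨hi, hv⟩ := frullani_core hb h
    have he : (fun t => (Real.exp (-(a * t)) - Real.exp (-(b * t))) / t)
        = fun t => -((Real.exp (-(b * t)) - Real.exp (-(a * t))) / t) := by
      funext t; ring
    rw [he]
    refine ⟨hi.neg, ?_⟩
    rw [MeasureTheory.integral_neg, hv]
    ring

lemma frullani_abs {a b : ℝ} (ha : 0 < a) (hb : 0 < b) :
    (∫ t in Ioi (0:ℝ), |(Real.exp (-(a * t)) - Real.exp (-(b * t))) / t|)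
      = |Real.log b - Real.log a| := by
  have key : ∀ a b : ℝ, 0 < a → a ≤ b →
      (∫ t in Ioi (0:ℝ), |(Real.exp (-(a * t)) - Real.exp (-(b * t))) / t|)
        = |Real.log b - Real.log a| := by
    intro a b ha hab
    have h1 : (∫ t in Ioi (0:ℝ), |(Real.exp (-(a * t)) - Real.exp (-(b * t))) / t|)
        = ∫ t in Ioi (0:ℝ), (Real.exp (-(a * t)) - Real.exp (-(b * t))) / t := by
      apply setIntegral_congr_fun measurableSet_Ioi
      intro t ht
      apply abs_of_nonneg
      apply div_nonneg _ (le_of_lt ht)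
      have : -(b * t) ≤ -(a * t) := by nlinarith [mem_Ioi.mp ht]
      simpa using Real.exp_le_exp.mpr this
    rw [h1, (frullani_core ha hab).2,
      abs_of_nonneg (sub_nonneg.mpr (Real.log_le_log ha hab))]
  rcases le_total a b with h | h
  · exact key a b ha h
  · have he : (fun t => |(Real.exp (-(a * t)) - Real.exp (-(b * t))) / t|)
        = fun t => |(Real.exp (-(b * t)) - Real.exp (-(a * t))) / t| := by
      funext t
      rw [abs_div, abs_div, abs_sub_comm]
    rw [he, key b a hb h, abs_sub_comm]

lemma abs_log_le {y : ℝ} (h0 : 0 < y) (h1 : y ≤ 1) : |Real.log y| ≤ 2 / Real.sqrt y := by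
  have hs : 0 < Real.sqrt y := Real.sqrt_pos.mpr h0
  have hinv : 0 < (Real.sqrt y)⁻¹ := inv_pos.mpr hs
  have h2 : Real.log y = -(2 * Real.log (Real.sqrt y)⁻¹) := by
    have h2' : Real.log y = 2 * Real.log (Real.sqrt y) := by
      conv_lhs => rw [← Real.sq_sqrt h0.le]
      rw [Real.log_pow]; norm_num
    rw [Real.log_inv, h2']
    ring
  have h3 : Real.log (Real.sqrt y)⁻¹ ≤ (Real.sqrt y)⁻¹ - 1 :=
    Real.log_le_sub_one_of_pos hinv
  have h4 : 0 ≤ Real.log (Real.sqrt y)⁻¹ := by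
    apply Real.log_nonneg
    rw [le_inv_comm₀ one_pos hs]
    simpa using Real.sqrt_le_sqrt h1
  rw [h2, abs_neg, abs_of_nonneg (by positivity)]
  rw [div_eq_mul_inv]
  nlinarith

lemma intInt_log_sin : IntervalIntegrable (fun x => Real.log (Real.sin x)) volume 0 (π / 2) := by
  have hle : (0:ℝ) ≤ π / 2 := (half_pos pi_pos).le
  rw [intervalIntegrable_iff_integrableOn_Ioc_of_le hle]
  set C : ℝ := 2 / Real.sqrt (2 / π) with hC
  have hg : IntegrableOn (fun x : ℝ => C * x ^ (-(1:ℝ)/2)) (Ioc 0 (π/2)) := by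
    have := (intervalIntegrable_rpow' (show (-1:ℝ) < -(1:ℝ)/2 by norm_num)
      (a := 0) (b := π/2)).const_mul C
    rwa [intervalIntegrable_iff_integrableOn_Ioc_of_le hle] at this
  apply Integrable.mono' hg
    ((Real.measurable_log.comp Real.continuous_sin.measurable).aestronglyMeasurable)
  filter_upwards [ae_restrict_mem measurableSet_Ioc] with x hx
  have hx0 : 0 < x := hx.1
  have hxpi : x < π := lt_of_le_of_lt hx.2 (half_lt_self pi_pos)
  have hs0 : 0 < Real.sin x := Real.sin_pos_of_pos_of_lt_pi hx0 hxpi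
  have hs1 : Real.sin x ≤ 1 := Real.sin_le_one x
  have hb : 2 / π * x ≤ Real.sin x := Real.mul_le_sin hx0.le hx.2
  have h2p : (0:ℝ) < 2 / π := by positivity
  calc ‖Real.log (Real.sin x)‖ = |Real.log (Real.sin x)| := rfl
    _ ≤ 2 / Real.sqrt (Real.sin x) := abs_log_le hs0 hs1
    _ ≤ 2 / Real.sqrt (2 / π * x) := by
        apply div_le_div_of_nonneg_left (by norm_num) (Real.sqrt_pos.mpr (by positivity))
        exact Real.sqrt_le_sqrt hb
    _ = C * x ^ (-(1:ℝ)/2) := by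
        rw [Real.sqrt_mul h2p.le, div_mul_eq_div_div, div_eq_mul_inv (2 / Real.sqrt (2/π)),
          show Real.sqrt x = x ^ ((1:ℝ)/2) from Real.sqrt_eq_rpow x,
          ← Real.rpow_neg hx0.le]
        norm_num
        left
        rw [hC, Real.sqrt_div (by norm_num : (0:ℝ) ≤ 2) π]

lemma intInt_log_cos : IntervalIntegrable (fun x => Real.log (Real.cos x)) volume 0 (π / 2) := by
  have h := (intInt_log_sin.comp_sub_left (π/2)).symm
  simp only [sub_zero, sub_self] at h
  have he : (fun x => Real.log (Real.sin (π/2 - x))) = fun x => Real.log (Real.cos x) := by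
    funext x; rw [Real.sin_pi_div_two_sub]
  rwa [he] at h

lemma log_cos_eq : (∫ x in (0:ℝ)..(π/2), Real.log (Real.cos x))
    = ∫ x in (0:ℝ)..(π/2), Real.log (Real.sin x) := by
  have h := intervalIntegral.integral_comp_sub_left (fun x => Real.log (Real.sin x)) (π/2)
    (a := 0) (b := π/2)
  simp only [sub_zero, sub_self] at h
  rw [← h]
  congr 1
  funext x
  rw [Real.sin_pi_div_two_sub]

lemma intInt_log_sin' : IntervalIntegrable (fun x => Real.log (Real.sin x)) volume (π/2) π := by
  have h := intInt_log_cos.comp_sub_right (π/2)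
  simp only [zero_add, add_halves] at h
  have he : (fun x => Real.log (Real.cos (x - π/2))) = fun x => Real.log (Real.sin x) := by
    funext x
    rw [show x - π/2 = -(π/2 - x) by ring, Real.cos_neg, Real.cos_pi_div_two_sub]
  rwa [he] at h

lemma log_sin_eq_J : (∫ x in (π/2:ℝ)..π, Real.log (Real.sin x))
    = ∫ x in (0:ℝ)..(π/2), Real.log (Real.sin x) := by
  have h := intervalIntegral.integral_comp_sub_left (fun x => Real.log (Real.sin x)) π
    (a := 0) (b := π/2)
  simp only [sub_zero] at h
  rw [show π - π/2 = π/2 by ring] at h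
  rw [← h]
  congr 1
  funext x
  rw [Real.sin_pi_sub]

lemma intInt_log_sin_half : IntervalIntegrable (fun x => Real.log (Real.sin (x/2))) volume 0 π := by
  have h := intInt_log_sin.comp_mul_right (c := 1/2) enorm_ne_top enorm_ne_top
  norm_num at h
  have he : (fun x => Real.log (Real.sin (x * (1/2)))) = fun x => Real.log (Real.sin (x/2)) := by
    funext x; rw [mul_one_div]
  rw [he] at h
  rw [show π/2/(1/2:ℝ) = π by ring] at h
  exact h

lemma J_value : (∫ x in (0:ℝ)..(π/2), Real.log (Real.sin x)) = -(π/2) * Real.log 2 := by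
  set J := ∫ x in (0:ℝ)..(π/2), Real.log (Real.sin x) with hJ
  have hK : (∫ x in (0:ℝ)..π, Real.log (Real.sin x)) = 2 * J := by
    rw [← intervalIntegral.integral_add_adjacent_intervals intInt_log_sin intInt_log_sin',
      log_sin_eq_J, ← hJ]
    ring
  have i4 := intInt_log_sin_half
  have i5 : IntervalIntegrable (fun x => Real.log (Real.cos (x/2))) volume 0 π := by
    have h := intInt_log_cos.comp_mul_right (c := 1/2) enorm_ne_top enorm_ne_top
    norm_num at h
    have he : (fun x => Real.log (Real.cos (x * (1/2)))) = fun x => Real.log (Real.cos (x/2)) := by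
      funext x; rw [mul_one_div]
    rw [he] at h
    rw [show π/2/(1/2:ℝ) = π by ring] at h
    exact h
  have hhalf : (∫ x in (0:ℝ)..π, Real.log (Real.sin x)) = π * Real.log 2 + 4 * J := by
    have hcongr : (∫ x in (0:ℝ)..π, Real.log (Real.sin x))
        = ∫ x in (0:ℝ)..π, (Real.log 2 + (Real.log (Real.sin (x/2)) + Real.log (Real.cos (x/2)))) := by
      apply intervalIntegral.integral_congr_ae
      have hpi : (volume : Measure ℝ) {π} = 0 := measure_singleton π
      filter_upwards [measure_eq_zero_iff_ae_notMem.mp hpi] with x hx hmem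
      rw [Set.uIoc_of_le pi_pos.le] at hmem
      have hx0 : 0 < x := hmem.1
      have hxpi : x < π := lt_of_le_of_ne hmem.2 (by simpa using hx)
      have hs : 0 < Real.sin (x/2) :=
        Real.sin_pos_of_pos_of_lt_pi (by linarith) (by linarith [pi_pos])
      have hc : 0 < Real.cos (x/2) :=
        Real.cos_pos_of_mem_Ioo ⟨by linarith [pi_pos], by linarith⟩
      have hsin : Real.sin x = 2 * (Real.sin (x/2) * Real.cos (x/2)) := by
        rw [show x = 2 * (x/2) by ring, Real.sin_two_mul]
        ring_nf
      rw [hsin, Real.log_mul (by norm_num) (by positivity), Real.log_mul hs.ne' hc.ne']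
    rw [hcongr,
      intervalIntegral.integral_add intervalIntegrable_const (i4.add i5),
      intervalIntegral.integral_add i4 i5,
      intervalIntegral.integral_const]
    have h4 : (∫ x in (0:ℝ)..π, Real.log (Real.sin (x/2))) = 2 * J := by
      have h := intervalIntegral.integral_comp_div (a := 0) (b := π)
        (fun x => Real.log (Real.sin x)) (c := 2) (by norm_num)
      norm_num at h
      rw [h, ← hJ]
    have h5 : (∫ x in (0:ℝ)..π, Real.log (Real.cos (x/2))) = 2 * J := by
      have h := intervalIntegral.integral_comp_div (a := 0) (b := π)
        (fun x => Real.log (Real.cos x)) (c := 2) (by norm_num)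
      norm_num at h
      rw [h, log_cos_eq, ← hJ]
    rw [h4, h5]
    simp [smul_eq_mul]
    ring
  have : 2 * J = π * Real.log 2 + 4 * J := by rw [← hK, hhalf]
  linarith

lemma log_sin_half_int : (∫ x in (0:ℝ)..π, Real.log (Real.sin (x/2))) = -π * Real.log 2 := by
  have h := intervalIntegral.integral_comp_div (a := 0) (b := π)
    (fun x => Real.log (Real.sin x)) (c := 2) (by norm_num)
  norm_num at h
  rw [h, J_value]
  ring

lemma one_sub_cos (θ : ℝ) : 1 - Real.cos θ = 2 * Real.sin (θ/2) ^ 2 := by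
  have h : Real.cos (2 * (θ/2)) = 2 * Real.cos (θ/2) ^ 2 - 1 := Real.cos_two_mul _
  rw [show 2 * (θ/2) = θ by ring] at h
  nlinarith [Real.sin_sq_add_cos_sq (θ/2)]

lemma theta_eq {θ : ℝ} (hθ : θ ∈ Set.Ioc (0:ℝ) π) :
    Real.log 2 - Real.log (2 * (1 - Real.cos θ))
      = -Real.log 2 - 2 * Real.log (Real.sin (θ/2)) := by
  have hs : 0 < Real.sin (θ/2) :=
    Real.sin_pos_of_pos_of_lt_pi (by linarith [hθ.1]) (by linarith [hθ.2, pi_pos])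
  rw [one_sub_cos, Real.log_mul two_ne_zero (by positivity),
    Real.log_mul two_ne_zero (by positivity), Real.log_pow]
  push_cast
  ring

lemma theta_integrable :
    IntegrableOn (fun θ => Real.log 2 - Real.log (2 * (1 - Real.cos θ))) (Set.Ioc 0 π) := by
  have i6 : IntegrableOn (fun θ => Real.log (Real.sin (θ/2))) (Set.Ioc 0 π) := by
    have := intInt_log_sin_half
    rwa [intervalIntegrable_iff_integrableOn_Ioc_of_le pi_pos.le] at this
  have base : IntegrableOn (fun θ => -Real.log 2 - 2 * Real.log (Real.sin (θ/2)))
      (Set.Ioc 0 π) := by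
    exact (integrableOn_const measure_Ioc_lt_top.ne).sub (i6.const_mul 2)
  apply base.congr
  filter_upwards [ae_restrict_mem measurableSet_Ioc] with θ hθ
  exact (theta_eq hθ).symm

lemma theta_value :
    (∫ θ in Set.Ioc (0:ℝ) π, (Real.log 2 - Real.log (2 * (1 - Real.cos θ))))
      = π * Real.log 2 := by
  rw [setIntegral_congr_fun measurableSet_Ioc (fun θ hθ => theta_eq hθ),
    ← intervalIntegral.integral_of_le pi_pos.le,
    intervalIntegral.integral_sub intervalIntegrable_const (intInt_log_sin_half.const_mul 2),
    intervalIntegral.integral_const_mul, log_sin_half_int, intervalIntegral.integral_const]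
  simp only [smul_eq_mul, sub_zero]
  ring
section Main

lemma hc_pos {θ : ℝ} (hθ : θ ∈ Set.Ioc (0:ℝ) π) : 0 < 2 * (1 - Real.cos θ) := by
  have hs : 0 < Real.sin (θ/2) :=
    Real.sin_pos_of_pos_of_lt_pi (by linarith [hθ.1]) (by linarith [hθ.2, pi_pos])
  rw [one_sub_cos]
  positivity

noncomputable def Fm : ℝ → ℝ → ℝ :=
  fun θ t => (Real.exp (-(2 * (1 - Real.cos θ) * t)) - Real.exp (-(2 * t))) / t

lemma h_meas : AEStronglyMeasurable (Function.uncurry Fm)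
    ((volume.restrict (Set.Ioc 0 π)).prod (volume.restrict (Set.Ioi 0))) := by
  have hset : MeasurableSet ((Set.Ioc (0:ℝ) π) ×ˢ (Set.Ioi (0:ℝ))) :=
    measurableSet_Ioc.prod measurableSet_Ioi
  have hcont : ContinuousOn (Function.uncurry Fm)
      ((Set.Ioc (0:ℝ) π) ×ˢ (Set.Ioi (0:ℝ))) := by
    apply ContinuousOn.div
    · apply Continuous.continuousOn
      apply Continuous.sub
      · apply Real.continuous_exp.comp
        fun_prop
      · apply Real.continuous_exp.comp
        fun_prop
    · exact continuous_snd.continuousOn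
    · intro p hp
      exact ne_of_gt hp.2
  rw [Measure.prod_restrict]
  exact hcont.aestronglyMeasurable hset

lemma h_int : Integrable (Function.uncurry Fm)
    ((volume.restrict (Set.Ioc 0 π)).prod (volume.restrict (Set.Ioi 0))) := by
  rw [integrable_prod_iff h_meas]
  constructor
  · filter_upwards [ae_restrict_mem measurableSet_Ioc] with θ hθ
    exact (frullani (hc_pos hθ) two_pos).1
  · apply Integrable.congr theta_integrable.abs
    filter_upwards [ae_restrict_mem measurableSet_Ioc] with θ hθ
    have := frullani_abs (hc_pos hθ) two_pos
    simp only [Real.norm_eq_abs]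
    exact this.symm

lemma inner_t {t : ℝ} (ht : t ∈ Set.Ioi (0:ℝ)) :
    (∫ θ in Set.Ioc (0:ℝ) π, Fm θ t)
      = π * (Real.exp (-(2 * t)) * (besselI 0 (2 * t) - 1) / t) := by
  have ht' : 0 < t := ht
  have h1 : (∫ θ in Set.Ioc (0:ℝ) π, Fm θ t)
      = (∫ θ in Set.Ioc (0:ℝ) π,
          (Real.exp (-(2 * (1 - Real.cos θ) * t)) - Real.exp (-(2 * t)))) / t := by
    rw [← MeasureTheory.integral_div]
    rfl
  have hi1 : IntegrableOn (fun θ => Real.exp (-(2 * (1 - Real.cos θ) * t)))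
      (Set.Ioc (0:ℝ) π) := by
    apply Continuous.integrableOn_Ioc
    apply Real.continuous_exp.comp
    fun_prop
  have hi2 : IntegrableOn (fun _ : ℝ => Real.exp (-(2 * t))) (Set.Ioc (0:ℝ) π) :=
    integrableOn_const measure_Ioc_lt_top.ne
  have h2 : (∫ θ in Set.Ioc (0:ℝ) π, Real.exp (-(2 * (1 - Real.cos θ) * t)))
      = Real.exp (-(2 * t)) * (π * besselI 0 (2 * t)) := by
    have hcongr : ∀ θ ∈ Set.Ioc (0:ℝ) π,
        Real.exp (-(2 * (1 - Real.cos θ) * t))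
          = Real.exp (-(2 * t)) * Real.exp ((2 * t) * Real.cos θ) := by
      intro θ _
      rw [← Real.exp_add]
      congr 1
      ring
    rw [setIntegral_congr_fun measurableSet_Ioc hcongr, MeasureTheory.integral_const_mul,
      besselI_zero (2 * t), intervalIntegral.integral_of_le pi_pos.le]
  have h3 : (∫ _ in Set.Ioc (0:ℝ) π, Real.exp (-(2 * t))) = π * Real.exp (-(2 * t)) := by
    rw [setIntegral_const, Real.volume_real_Ioc_of_le pi_pos.le, smul_eq_mul]
    ring_nf
  rw [h1, integral_sub hi1 hi2, h2, h3]
  field_simp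

lemma hmarg : IntegrableOn
    (fun t => Real.exp (-(2 * t)) * (besselI 0 (2 * t) - 1) / t) (Set.Ioi 0) := by
  have h := h_int.swap.integral_prod_left
  apply Integrable.congr (h.const_mul (1/π))
  filter_upwards [ae_restrict_mem measurableSet_Ioi] with t ht
  show (1/π) * (∫ θ in Set.Ioc (0:ℝ) π, Fm θ t) = _
  rw [inner_t ht, ← mul_assoc, one_div, inv_mul_cancel₀ Real.pi_ne_zero, one_mul]

lemma main1 : (∫ t in Set.Ioi (0:ℝ),
    Real.exp (-(2 * t)) * (besselI 0 (2 * t) - 1) / t) = Real.log 2 := by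
  have swap := integral_integral_swap h_int
  have lhs_eq : (∫ θ in Set.Ioc (0:ℝ) π, ∫ t in Set.Ioi (0:ℝ), Fm θ t) = π * Real.log 2 := by
    have hpt : ∀ θ ∈ Set.Ioc (0:ℝ) π, (∫ t in Set.Ioi (0:ℝ), Fm θ t)
        = Real.log 2 - Real.log (2 * (1 - Real.cos θ)) :=
      fun θ hθ => (frullani (hc_pos hθ) two_pos).2
    rw [setIntegral_congr_fun measurableSet_Ioc hpt, theta_value]
  have rhs_eq : (∫ t in Set.Ioi (0:ℝ), ∫ θ in Set.Ioc (0:ℝ) π, Fm θ t)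
      = π * ∫ t in Set.Ioi (0:ℝ), Real.exp (-(2 * t)) * (besselI 0 (2 * t) - 1) / t := by
    rw [setIntegral_congr_fun measurableSet_Ioi (fun t ht => inner_t ht), MeasureTheory.integral_const_mul]
  have : π * Real.log 2
      = π * ∫ t in Set.Ioi (0:ℝ), Real.exp (-(2 * t)) * (besselI 0 (2 * t) - 1) / t := by
    rw [← lhs_eq, swap, rhs_eq]
  exact (mul_left_cancel₀ Real.pi_ne_zero this).symm

end Main

/-- `∫_0^∞ e^{-2t}(I_0(2t) - 1) dt/t = log 2`; equivalently `𝓘_1(0) = 0`. -/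
theorem integral_besselI_one_dim :
    (∫ t in Set.Ioi (0:ℝ), Real.exp (-(2 * t)) * (besselI 0 (2 * t) - 1) / t) = Real.log 2 ∧
    (-∫ t in Set.Ioi (0:ℝ),
        (Real.exp (-(2 * t)) * besselI 0 (2 * t) - Real.exp (-t)) / t) = 0 := by
  refine ⟨main1, ?_⟩
  obtain ⟨h2i, h2v⟩ := frullani (two_pos) (one_pos)
  have he : (fun t => (Real.exp (-(2 * t)) - Real.exp (-(1 * t))) / t)
      = fun t => (Real.exp (-(2 * t)) - Real.exp (-t)) / t := by
    funext t; rw [one_mul]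
  rw [he] at h2i h2v
  rw [Real.log_one, zero_sub] at h2v
  have hsum : (∫ t in Set.Ioi (0:ℝ),
      (Real.exp (-(2 * t)) * besselI 0 (2 * t) - Real.exp (-t)) / t)
      = ∫ t in Set.Ioi (0:ℝ),
        (Real.exp (-(2 * t)) * (besselI 0 (2 * t) - 1) / t
          + (Real.exp (-(2 * t)) - Real.exp (-t)) / t) := by
    apply setIntegral_congr_fun measurableSet_Ioi
    intro t _
    ring
  rw [hsum, integral_add hmarg h2i, main1, h2v]
  ring
end
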